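/- Let H be a complex Hilbert space and let X, Y be k-dimensional subspaces of H with dim(X ∩ Y) = k − 2. If there exist two ortho-adjacent k-dimensional subspaces Z, Z' of H such that each of Z and Z' is ortho-adjacent to both X and Y, then X and Y are compatible. -/

import Mathlib

noncomputable section

open scoped Classical

variable {H : Type*} [NormedAddCommGroup H] [InnerProductSpace ℂ H] [CompleteSpace H]

/-- The orthogonal projection onto `X`, as an operator `H → H` (junk value `0` if the
orthogonal projection onto `X` does not exist; it always exists for finite-dimensional,
and more generally complete, subspaces). -/
noncomputable def projOn (X : Submodule ℂ H) : H →L[ℂ] H :=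
  if h : Submodule.HasOrthogonalProjection X then
    haveI := h
    X.subtypeL.comp (X.orthogonalProjectionOnto)
  else 0

/-- Two subspaces of `H` are compatible if their orthogonal projections commute. -/
def Compatible (X Y : Submodule ℂ H) : Prop :=
  projOn X * projOn Y = projOn Y * projOn X

/-- `X` is a `k`-dimensional subspace of `H`. -/
def IsDim (k : ℕ) (X : Submodule ℂ H) : Prop :=
  FiniteDimensional ℂ X ∧ Module.finrank ℂ X = k

/-- Two (distinct) `k`-dimensional subspaces are adjacent if their intersection is
`(k-1)`-dimensional. -/
def AdjacentSub (k : ℕ) (X Y : Submodule ℂ H) : Prop :=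
  X ≠ Y ∧ Module.finrank ℂ ↥(X ⊓ Y) = k - 1

/-- Ortho-adjacency: adjacent and compatible. -/
def OrthoAdjacent (k : ℕ) (X Y : Submodule ℂ H) : Prop :=
  AdjacentSub k X Y ∧ Compatible X Y

/-- The ortho-Grassmann graph `Γ⊥_k(H)` on the `k`-dimensional subspaces of `H`:
two `k`-dimensional subspaces are connected by an edge if they are ortho-adjacent. -/
def orthoGrassmannGraph (H : Type*) [NormedAddCommGroup H] [InnerProductSpace ℂ H]
    [CompleteSpace H] (k : ℕ) : SimpleGraph {X : Submodule ℂ H // IsDim k X} where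
  Adj X Y := OrthoAdjacent k X.1 Y.1
  symm := ⟨by
    rintro X Y ⟨⟨hne, hdim⟩, hc⟩
    refine ⟨⟨hne.symm, by rwa [inf_comm]⟩, ?_⟩
    unfold Compatible at hc ⊢
    exact hc.symm⟩
  loopless := ⟨fun X h => h.1.1 rfl⟩

/-- The Grassmann graph `Γ_k(H)` on the `k`-dimensional subspaces of `H`:
two `k`-dimensional subspaces are connected by an edge if they are adjacent. -/
def grassmannGraph (H : Type*) [NormedAddCommGroup H] [InnerProductSpace ℂ H]
    [CompleteSpace H] (k : ℕ) : SimpleGraph {X : Submodule ℂ H // IsDim k X} where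
  Adj X Y := AdjacentSub k X.1 Y.1
  symm := ⟨by
    rintro X Y ⟨hne, hdim⟩
    exact ⟨hne.symm, by rwa [inf_comm]⟩⟩
  loopless := ⟨fun X h => h.1 rfl⟩

set_option linter.unusedVariables false
set_option linter.unusedSectionVars false
set_option maxHeartbeats 800000

section AuxiliaryLemmas
open Module Submodule
open scoped ComplexInnerProductSpace

section basics
variable (X : Submodule ℂ H) [HasOrthogonalProjection X]

lemma projOn_def : projOn X = X.subtypeL.comp (orthogonalProjection X) := dif_pos ‹_›

lemma projOn_apply_mem (x : H) : projOn X x ∈ X := by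
  rw [projOn_def]; exact (orthogonalProjection X x).2

lemma projOn_eq_self {x : H} (hx : x ∈ X) : projOn X x = x := by
  rw [projOn_def]
  exact starProjection_eq_self_iff.2 hx

lemma projOn_eq_zero {x : H} (hx : x ∈ Xᗮ) : projOn X x = 0 := by
  rw [projOn_def]
  have h := Submodule.orthogonalProjectionOnto_apply_of_mem_orthogonal hx
  calc (X.subtypeL.comp (orthogonalProjection X)) x
      = ((orthogonalProjection X x : X) : H) := rfl
    _ = ((0 : X) : H) := by rw [h]
    _ = 0 := rfl

lemma sub_projOn_mem_orthogonal (x : H) : x - projOn X x ∈ Xᗮ := by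
  rw [projOn_def]; exact sub_starProjection_mem_orthogonal x
end basics

section ops
variable {A B C W X : Submodule ℂ H}

lemma projOn_comp_eq_zero [HasOrthogonalProjection A] [HasOrthogonalProjection B]
    (h : B ≤ Aᗮ) : projOn A * projOn B = 0 := by
  ext x
  exact projOn_eq_zero A (h (projOn_apply_mem B x))

lemma projOn_idem (X : Submodule ℂ H) [HasOrthogonalProjection X] :
    projOn X * projOn X = projOn X := by
  ext x
  exact projOn_eq_self X (projOn_apply_mem X x)

lemma projOn_comp_of_le [HasOrthogonalProjection W] [HasOrthogonalProjection X]
    (h : W ≤ X) : projOn X * projOn W = projOn W := by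
  ext x
  exact projOn_eq_self X (h (projOn_apply_mem W x))

lemma projOn_comp_of_le' [HasOrthogonalProjection W] [HasOrthogonalProjection X]
    (h : W ≤ X) : projOn W * projOn X = projOn W := by
  ext x
  have h0 : projOn W (x - projOn X x) = 0 :=
    projOn_eq_zero W (Submodule.orthogonal_le h (sub_projOn_mem_orthogonal X x))
  have := map_sub (projOn W) x (projOn X x)
  rw [h0] at this
  have hx : projOn W (projOn X x) = projOn W x := (sub_eq_zero.1 this.symm).symm
  simpa [ContinuousLinearMap.mul_apply] using hx

lemma compatible_of_le [HasOrthogonalProjection W] [HasOrthogonalProjection X]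
    (h : W ≤ X) : Compatible W X := by
  unfold Compatible
  rw [projOn_comp_of_le h, projOn_comp_of_le' h]

lemma Compatible.symm' (h : Compatible A B) : Compatible B A := Eq.symm h

lemma Compatible.le_sup [HasOrthogonalProjection A] [HasOrthogonalProjection C]
    (h : Compatible A C) : A ≤ (A ⊓ C) ⊔ (A ⊓ Cᗮ) := by
  intro x hx
  have h1 : projOn C x ∈ A ⊓ C := by
    refine ⟨?_, projOn_apply_mem C x⟩
    have e1 : (projOn C * projOn A) x = (projOn A * projOn C) x := by rw [h]
    have e2 : projOn C x = projOn A (projOn C x) := by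
      simpa [ContinuousLinearMap.mul_apply, projOn_eq_self A hx] using e1
    rw [e2]; exact projOn_apply_mem A _
  have h2 : x - projOn C x ∈ A ⊓ Cᗮ :=
    ⟨Submodule.sub_mem A hx h1.1, sub_projOn_mem_orthogonal C x⟩
  have hx' : x = projOn C x + (x - projOn C x) := by abel
  rw [hx']
  exact Submodule.add_mem _ (Submodule.mem_sup_left h1) (Submodule.mem_sup_right h2)

lemma Compatible.sup_eq [HasOrthogonalProjection A] [HasOrthogonalProjection C]
    (h : Compatible A C) : (A ⊓ C) ⊔ (A ⊓ Cᗮ) = A :=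
  le_antisymm (sup_le inf_le_left inf_le_left) h.le_sup

lemma Compatible.finrank_eq [HasOrthogonalProjection A] [HasOrthogonalProjection C]
    [FiniteDimensional ℂ A]
    (h : Compatible A C) :
    Module.finrank ℂ (A ⊓ C : Submodule ℂ H) + Module.finrank ℂ (A ⊓ Cᗮ : Submodule ℂ H)
      = Module.finrank ℂ A := by
  have h0 : (A ⊓ C) ⊓ (A ⊓ Cᗮ) = ⊥ := by
    apply le_bot_iff.1
    intro x hx
    have : x ∈ C ⊓ Cᗮ := ⟨hx.1.2, hx.2.2⟩
    rw [Submodule.inf_orthogonal_eq_bot] at this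
    exact this
  have := Submodule.finrank_sup_add_finrank_inf_eq (A ⊓ C) (A ⊓ Cᗮ)
  rw [h0, h.sup_eq, finrank_bot] at this
  omega
end ops

lemma projOn_sup {W A : Submodule ℂ H} [HasOrthogonalProjection W] [HasOrthogonalProjection A]
    [HasOrthogonalProjection (W ⊔ A)] (h : A ≤ Wᗮ) :
    projOn (W ⊔ A) = projOn W + projOn A := by
  ext x
  have hWA : W ≤ Aᗮ := le_trans (Submodule.le_orthogonal_orthogonal W) (Submodule.orthogonal_le h)
  have hm : projOn W x + projOn A x ∈ W ⊔ A :=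
    Submodule.add_mem _ (Submodule.mem_sup_left (projOn_apply_mem W x))
      (Submodule.mem_sup_right (projOn_apply_mem A x))
  have ho : x - (projOn W x + projOn A x) ∈ (W ⊔ A)ᗮ := by
    rw [← Submodule.inf_orthogonal]
    constructor
    · have := Submodule.sub_mem Wᗮ (sub_projOn_mem_orthogonal W x) (h (projOn_apply_mem A x))
      simpa [sub_sub] using this
    · have := Submodule.sub_mem Aᗮ (sub_projOn_mem_orthogonal A x) (hWA (projOn_apply_mem W x))
      have e : x - projOn A x - projOn W x = x - (projOn W x + projOn A x) := by abel
      rwa [e] at this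
  have key := eq_starProjection_of_mem_of_inner_eq_zero (K := W ⊔ A) (u := x) hm
    (fun w hw => Submodule.inner_left_of_mem_orthogonal hw ho)
  rw [projOn_def]
  simpa [ContinuousLinearMap.comp_apply, ContinuousLinearMap.add_apply] using key

open scoped ComplexInnerProductSpace

section dims
variable {W V : Submodule ℂ H} [FiniteDimensional ℂ V]

lemma sup_inf_orthogonal_of_le (h : W ≤ V) : W ⊔ (V ⊓ Wᗮ) = V := by
  haveI : FiniteDimensional ℂ W := Submodule.finiteDimensional_of_le h
  have hc : Compatible V W := (compatible_of_le h).symm'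
  have h2 := hc.sup_eq
  rwa [inf_eq_right.2 h] at h2

lemma finrank_inf_orthogonal_of_le (h : W ≤ V) :
    Module.finrank ℂ W + Module.finrank ℂ (V ⊓ Wᗮ : Submodule ℂ H) = Module.finrank ℂ V := by
  haveI : FiniteDimensional ℂ W := Submodule.finiteDimensional_of_le h
  have hc : Compatible V W := (compatible_of_le h).symm'
  have h2 := hc.finrank_eq
  rwa [inf_eq_right.2 h] at h2

lemma exists_spanning {S : Submodule ℂ H} [FiniteDimensional ℂ S]
    (hS : Module.finrank ℂ S = 1) : ∃ e : H, e ≠ 0 ∧ S = ℂ ∙ e := by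
  have hbot : S ≠ ⊥ := by
    intro hb
    rw [hb, finrank_bot] at hS
    omega
  obtain ⟨e, heS, he0⟩ := Submodule.exists_mem_ne_zero_of_ne_bot hbot
  refine ⟨e, he0, ?_⟩
  refine (Submodule.eq_of_le_of_finrank_le ((Submodule.span_singleton_le_iff_mem e S).2 heS) ?_).symm
  rw [hS, finrank_span_singleton he0]

lemma mem_span2 {u v x : H} (hx : x ∈ (ℂ ∙ u) ⊔ (ℂ ∙ v)) : ∃ a b : ℂ, x = a • u + b • v := by
  rcases Submodule.mem_sup.1 hx with ⟨y, hy, z, hz, rfl⟩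
  rcases Submodule.mem_span_singleton.1 hy with ⟨a, rfl⟩
  rcases Submodule.mem_span_singleton.1 hz with ⟨b, rfl⟩
  exact ⟨a, b, rfl⟩

lemma span_inf_eq_bot {u v : H} (hu0 : u ≠ 0) (huv : ⟪u, v⟫ = 0) :
    (ℂ ∙ u) ⊓ (ℂ ∙ v) = ⊥ := by
  apply le_bot_iff.1
  rintro x ⟨hxu, hxv⟩
  rcases Submodule.mem_span_singleton.1 hxu with ⟨a, rfl⟩
  rcases Submodule.mem_span_singleton.1 hxv with ⟨b, hb⟩
  have h1 : ⟪u, a • u⟫ = (0 : ℂ) := by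
    rw [← hb, inner_smul_right, huv, mul_zero]
  rw [inner_smul_right] at h1
  have : a = 0 := by
    rcases mul_eq_zero.1 h1 with h | h
    · exact h
    · exact absurd (inner_self_eq_zero.1 h) hu0
  simp [this]

lemma span2_eq {V : Submodule ℂ H} [FiniteDimensional ℂ V] {u v : H}
    (hu : u ∈ V) (hv : v ∈ V) (hu0 : u ≠ 0) (hv0 : v ≠ 0) (huv : ⟪u, v⟫ = 0)
    (hV : Module.finrank ℂ V = 2) : V = (ℂ ∙ u) ⊔ (ℂ ∙ v) := by
  have hle : (ℂ ∙ u) ⊔ (ℂ ∙ v) ≤ V :=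
    sup_le ((Submodule.span_singleton_le_iff_mem u V).2 hu)
      ((Submodule.span_singleton_le_iff_mem v V).2 hv)
  refine (Submodule.eq_of_le_of_finrank_le hle ?_).symm
  have := Submodule.finrank_sup_add_finrank_inf_eq (ℂ ∙ u) (ℂ ∙ v)
  rw [span_inf_eq_bot hu0 huv, finrank_bot, finrank_span_singleton hu0,
    finrank_span_singleton hv0] at this
  omega
end dims

section engine
open Submodule Module

lemma span_inf_eq_bot_of_ne {u v : H} (hu0 : u ≠ 0) (hv0 : v ≠ 0)
    (h : (ℂ ∙ u : Submodule ℂ H) ≠ ℂ ∙ v) : (ℂ ∙ u) ⊓ (ℂ ∙ v) = ⊥ := by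
  apply le_bot_iff.1
  rintro x ⟨hxu, hxv⟩
  rcases Submodule.mem_span_singleton.1 hxu with ⟨a, rfl⟩
  by_cases ha : a = 0
  · simp [ha]
  · exfalso
    apply h
    have hu_mem : u ∈ (ℂ ∙ v : Submodule ℂ H) := by
      have h2 : a⁻¹ • (a • u) ∈ (ℂ ∙ v : Submodule ℂ H) := Submodule.smul_mem _ _ hxv
      rwa [smul_smul, inv_mul_cancel₀ ha, one_smul] at h2
    exact Submodule.eq_of_le_of_finrank_le ((Submodule.span_singleton_le_iff_mem _ _).2 hu_mem)
      (by rw [finrank_span_singleton hu0, finrank_span_singleton hv0])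

lemma mem_span_right_of_inner_zero {d c x : H} (hd0 : d ≠ 0)
    (hx : x ∈ (ℂ ∙ d) ⊔ (ℂ ∙ c)) (hdc : ⟪d, c⟫ = 0) (hdx : ⟪d, x⟫ = 0) :
    x ∈ (ℂ ∙ c : Submodule ℂ H) := by
  obtain ⟨a, b, rfl⟩ := mem_span2 hx
  have h1 : ⟪d, a • d + b • c⟫ = a * ⟪d, d⟫ := by
    rw [inner_add_right, inner_smul_right, inner_smul_right, hdc]; ring
  rw [hdx] at h1
  have ha : a = 0 := by
    rcases mul_eq_zero.1 h1.symm with h | h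
    · exact h
    · exact absurd (inner_self_eq_zero.1 h) hd0
  rw [ha, zero_smul, zero_add]
  exact Submodule.smul_mem _ _ (Submodule.mem_span_singleton_self c)

lemma engine {A C C' : Submodule ℂ H} [FiniteDimensional ℂ A] {d c c' : H}
    (hd0 : d ≠ 0) (hc0 : c ≠ 0) (hc'0 : c' ≠ 0)
    (hC : C = (ℂ ∙ d) ⊔ (ℂ ∙ c)) (hC' : C' = (ℂ ∙ d) ⊔ (ℂ ∙ c'))
    (hcC' : c ∈ C'ᗮ) (hc'C : c' ∈ Cᗮ)
    (hA2 : Module.finrank ℂ A = 2)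
    (hAC : Module.finrank ℂ (A ⊓ C : Submodule ℂ H) = 1)
    (hAC' : Module.finrank ℂ (A ⊓ C' : Submodule ℂ H) = 1)
    (hACo : Module.finrank ℂ (A ⊓ Cᗮ : Submodule ℂ H) = 1)
    (hAC'o : Module.finrank ℂ (A ⊓ C'ᗮ : Submodule ℂ H) = 1)
    (hne : A ⊓ C ≠ A ⊓ C') :
    A = (ℂ ∙ c) ⊔ (ℂ ∙ c') := by
  obtain ⟨e, he0, hACe⟩ := exists_spanning hAC
  obtain ⟨e', he'0, hAC'e⟩ := exists_spanning hAC'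
  obtain ⟨f, hf0, hACof⟩ := exists_spanning hACo
  obtain ⟨f', hf'0, hAC'of⟩ := exists_spanning hAC'o
  have heAC : e ∈ A ⊓ C := hACe ▸ Submodule.mem_span_singleton_self e
  have he'AC' : e' ∈ A ⊓ C' := hAC'e ▸ Submodule.mem_span_singleton_self e'
  have hfm : f ∈ A ⊓ Cᗮ := hACof ▸ Submodule.mem_span_singleton_self f
  have hf'm : f' ∈ A ⊓ C'ᗮ := hAC'of ▸ Submodule.mem_span_singleton_self f'
  have hdC : d ∈ C := hC ▸ Submodule.mem_sup_left (Submodule.mem_span_singleton_self d)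
  have hdC' : d ∈ C' := hC' ▸ Submodule.mem_sup_left (Submodule.mem_span_singleton_self d)
  have hcC : c ∈ C := hC ▸ Submodule.mem_sup_right (Submodule.mem_span_singleton_self c)
  have hc'C' : c' ∈ C' := hC' ▸ Submodule.mem_sup_right (Submodule.mem_span_singleton_self c')
  have hcd : ⟪c, d⟫ = 0 := Submodule.inner_left_of_mem_orthogonal hdC' hcC'
  have hc'd : ⟪c', d⟫ = 0 := Submodule.inner_left_of_mem_orthogonal hdC hc'C
  -- e is not in the span of d
  have heNd : e ∉ (ℂ ∙ d : Submodule ℂ H) := by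
    intro hmem
    apply hne
    have h1 : A ⊓ C ≤ A ⊓ C' := by
      rw [hACe]
      exact (Submodule.span_singleton_le_iff_mem _ _).2
        ⟨heAC.1, hC' ▸ Submodule.mem_sup_left hmem⟩
    exact Submodule.eq_of_le_of_finrank_le h1 (by rw [hAC, hAC'])
  have he'Nd : e' ∉ (ℂ ∙ d : Submodule ℂ H) := by
    intro hmem
    apply hne
    have h1 : A ⊓ C' ≤ A ⊓ C := by
      rw [hAC'e]
      exact (Submodule.span_singleton_le_iff_mem _ _).2
        ⟨he'AC'.1, hC ▸ Submodule.mem_sup_left hmem⟩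
    exact (Submodule.eq_of_le_of_finrank_le h1 (by rw [hAC, hAC'])).symm
  -- hence the inner products with c, c' are nonzero
  have hce : ⟪c, e⟫ ≠ 0 := by
    intro h0
    apply heNd
    have hx : e ∈ (ℂ ∙ c) ⊔ (ℂ ∙ d) := by
      rw [sup_comm]; exact hC ▸ heAC.2
    exact mem_span_right_of_inner_zero hc0 hx hcd h0
  have hc'e' : ⟪c', e'⟫ ≠ 0 := by
    intro h0
    apply he'Nd
    have hx : e' ∈ (ℂ ∙ c') ⊔ (ℂ ∙ d) := by
      rw [sup_comm]; exact hC' ▸ he'AC'.2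
    exact mem_span_right_of_inner_zero hc'0 hx hc'd h0
  -- A is spanned by e and e'
  have hspanne : (ℂ ∙ e : Submodule ℂ H) ≠ ℂ ∙ e' := by
    intro h; exact hne (by rw [hACe, hAC'e, h])
  have hA : A = (ℂ ∙ e) ⊔ (ℂ ∙ e') := by
    have hle : (ℂ ∙ e) ⊔ (ℂ ∙ e') ≤ A :=
      sup_le ((Submodule.span_singleton_le_iff_mem _ _).2 heAC.1)
        ((Submodule.span_singleton_le_iff_mem _ _).2 he'AC'.1)
    refine (Submodule.eq_of_le_of_finrank_le hle ?_).symm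
    have h2 := Submodule.finrank_sup_add_finrank_inf_eq (ℂ ∙ e) (ℂ ∙ e' : Submodule ℂ H)
    rw [span_inf_eq_bot_of_ne he0 he'0 hspanne, finrank_bot, finrank_span_singleton he0,
      finrank_span_singleton he'0] at h2
    omega
  -- f forces e' ⊥ C
  have he'c' : e' ∈ (ℂ ∙ c' : Submodule ℂ H) := by
    obtain ⟨l, m, hf⟩ := mem_span2 (hA ▸ hfm.1)
    have h1 : ⟪c, f⟫ = 0 := Submodule.inner_right_of_mem_orthogonal hcC hfm.2
    have hce' : ⟪c, e'⟫ = 0 := Submodule.inner_left_of_mem_orthogonal he'AC'.2 hcC'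
    have h2 : (0 : ℂ) = l * ⟪c, e⟫ + m * ⟪c, e'⟫ := by
      rw [← h1, hf, inner_add_right, inner_smul_right, inner_smul_right]
    rw [hce', mul_zero, add_zero] at h2
    have hl : l = 0 := by
      rcases mul_eq_zero.1 h2.symm with h | h
      · exact h
      · exact absurd h hce
    have hf2 : f = m • e' := by rw [hf, hl, zero_smul, zero_add]
    have hm : m ≠ 0 := by
      rintro rfl
      rw [zero_smul] at hf2
      exact hf0 hf2
    have he'Co : e' ∈ Cᗮ := by
      have h3 : m⁻¹ • f ∈ Cᗮ := Submodule.smul_mem _ _ hfm.2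
      rwa [hf2, smul_smul, inv_mul_cancel₀ hm, one_smul] at h3
    have hde' : ⟪d, e'⟫ = 0 := Submodule.inner_right_of_mem_orthogonal hdC he'Co
    have hdc' : ⟪d, c'⟫ = 0 := Submodule.inner_right_of_mem_orthogonal hdC hc'C
    exact mem_span_right_of_inner_zero hd0 (hC' ▸ he'AC'.2) hdc' hde'
  -- f' forces e ⊥ C'
  have hec : e ∈ (ℂ ∙ c : Submodule ℂ H) := by
    obtain ⟨l, m, hf'⟩ := mem_span2 (hA ▸ hf'm.1)
    have h1 : ⟪c', f'⟫ = 0 := Submodule.inner_right_of_mem_orthogonal hc'C' hf'm.2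
    have hc'e : ⟪c', e⟫ = 0 := Submodule.inner_left_of_mem_orthogonal heAC.2 hc'C
    have h2 : (0 : ℂ) = l * ⟪c', e⟫ + m * ⟪c', e'⟫ := by
      rw [← h1, hf', inner_add_right, inner_smul_right, inner_smul_right]
    rw [hc'e, mul_zero, zero_add] at h2
    have hm : m = 0 := by
      rcases mul_eq_zero.1 h2.symm with h | h
      · exact h
      · exact absurd h hc'e'
    have hf'2 : f' = l • e := by rw [hf', hm, zero_smul, add_zero]
    have hl : l ≠ 0 := by
      rintro rfl
      rw [zero_smul] at hf'2
      exact hf'0 hf'2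
    have heC'o : e ∈ C'ᗮ := by
      have h3 : l⁻¹ • f' ∈ C'ᗮ := Submodule.smul_mem _ _ hf'm.2
      rwa [hf'2, smul_smul, inv_mul_cancel₀ hl, one_smul] at h3
    have hde : ⟪d, e⟫ = 0 := Submodule.inner_right_of_mem_orthogonal hdC' heC'o
    have hdc : ⟪d, c⟫ = 0 := Submodule.inner_right_of_mem_orthogonal hdC' hcC'
    exact mem_span_right_of_inner_zero hd0 (hC ▸ heAC.2) hdc hde
  have hfin1 : A ⊓ C = (ℂ ∙ c : Submodule ℂ H) := by
    refine Submodule.eq_of_le_of_finrank_le ?_ ?_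
    · rw [hACe]; exact (Submodule.span_singleton_le_iff_mem _ _).2 hec
    · rw [hAC, finrank_span_singleton hc0]
  have hfin2 : A ⊓ C' = (ℂ ∙ c' : Submodule ℂ H) := by
    refine Submodule.eq_of_le_of_finrank_le ?_ ?_
    · rw [hAC'e]; exact (Submodule.span_singleton_le_iff_mem _ _).2 he'c'
    · rw [hAC', finrank_span_singleton hc'0]
  rw [hA, ← hACe, ← hAC'e, hfin1, hfin2]
end engine

lemma le_orthogonal_of_gens {u v w z : H}
    (h1 : ⟪u, w⟫ = 0) (h2 : ⟪u, z⟫ = 0) (h3 : ⟪v, w⟫ = 0) (h4 : ⟪v, z⟫ = 0) :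
    ((ℂ ∙ w) ⊔ (ℂ ∙ z) : Submodule ℂ H) ≤ (((ℂ ∙ u) ⊔ (ℂ ∙ v) : Submodule ℂ H))ᗮ := by
  intro x hx
  obtain ⟨a, b, rfl⟩ := mem_span2 hx
  rw [Submodule.mem_orthogonal]
  intro y hy
  obtain ⟨p, q, rfl⟩ := mem_span2 hy
  simp [inner_add_left, inner_add_right, inner_smul_left, inner_smul_right, h1, h2, h3, h4]

lemma caseI {A C C' : Submodule ℂ H} [FiniteDimensional ℂ A] {d : H}
    (hd0 : d ≠ 0) (hD : C ⊓ C' = (ℂ ∙ d : Submodule ℂ H))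
    (hA2 : Module.finrank ℂ A = 2)
    (hAC : Module.finrank ℂ (A ⊓ C : Submodule ℂ H) = 1)
    (hAC' : Module.finrank ℂ (A ⊓ C' : Submodule ℂ H) = 1)
    (hACo : Module.finrank ℂ (A ⊓ Cᗮ : Submodule ℂ H) = 1)
    (hAC'o : Module.finrank ℂ (A ⊓ C'ᗮ : Submodule ℂ H) = 1)
    (heq : A ⊓ C = A ⊓ C') :
    ∃ f : H, f ≠ 0 ∧ f ∈ Cᗮ ∧ f ∈ C'ᗮ ∧ A = (ℂ ∙ d) ⊔ (ℂ ∙ f) ∧ d ∈ A := by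
  have hle : A ⊓ C ≤ (ℂ ∙ d : Submodule ℂ H) := by
    rw [← hD]
    exact le_inf inf_le_right (heq.le.trans inf_le_right)
  have hACd : A ⊓ C = (ℂ ∙ d : Submodule ℂ H) :=
    Submodule.eq_of_le_of_finrank_le hle (by rw [hAC, finrank_span_singleton hd0])
  have hdA : d ∈ A := (hACd ▸ Submodule.mem_span_singleton_self d).1
  have hdC : d ∈ C := (hACd ▸ Submodule.mem_span_singleton_self d).2
  have hdC' : d ∈ C' := by
    have : d ∈ A ⊓ C' := (heq ▸ hACd.symm) ▸ Submodule.mem_span_singleton_self d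
    exact this.2
  obtain ⟨f, hf0, hACof⟩ := exists_spanning hACo
  obtain ⟨f', hf'0, hAC'of⟩ := exists_spanning hAC'o
  have hfm : f ∈ A ⊓ Cᗮ := hACof ▸ Submodule.mem_span_singleton_self f
  have hf'm : f' ∈ A ⊓ C'ᗮ := hAC'of ▸ Submodule.mem_span_singleton_self f'
  have hdf : ⟪d, f⟫ = 0 := Submodule.inner_right_of_mem_orthogonal hdC hfm.2
  have hAform : A = (ℂ ∙ d) ⊔ (ℂ ∙ f) := span2_eq hdA hfm.1 hd0 hf0 hdf hA2
  have hdf' : ⟪d, f'⟫ = 0 := Submodule.inner_right_of_mem_orthogonal hdC' hf'm.2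
  have hf'f : f' ∈ (ℂ ∙ f : Submodule ℂ H) :=
    mem_span_right_of_inner_zero hd0 (hAform ▸ hf'm.1) hdf hdf'
  obtain ⟨b, hb⟩ := Submodule.mem_span_singleton.1 hf'f
  have hbne : b ≠ 0 := by
    rintro rfl
    rw [zero_smul] at hb
    exact hf'0 hb.symm
  have hfC' : f ∈ C'ᗮ := by
    have h3 : b⁻¹ • f' ∈ C'ᗮ := Submodule.smul_mem _ _ hf'm.2
    rwa [← hb, smul_smul, inv_mul_cancel₀ hbne, one_smul] at h3
  exact ⟨f, hf0, hfm.2, hfC', hAform, hdA⟩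

lemma core {A B C C' : Submodule ℂ H}
    [FiniteDimensional ℂ A] [FiniteDimensional ℂ B]
    [FiniteDimensional ℂ C] [FiniteDimensional ℂ C']
    (hA2 : Module.finrank ℂ A = 2) (hB2 : Module.finrank ℂ B = 2)
    (hC2 : Module.finrank ℂ C = 2) (hC'2 : Module.finrank ℂ C' = 2)
    (hAB : A ⊓ B = ⊥)
    (hCC' : Module.finrank ℂ (C ⊓ C' : Submodule ℂ H) = 1)
    (hAC : Module.finrank ℂ (A ⊓ C : Submodule ℂ H) = 1)
    (hAC' : Module.finrank ℂ (A ⊓ C' : Submodule ℂ H) = 1)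
    (hBC : Module.finrank ℂ (B ⊓ C : Submodule ℂ H) = 1)
    (hBC' : Module.finrank ℂ (B ⊓ C' : Submodule ℂ H) = 1)
    (cAC : Compatible A C) (cAC' : Compatible A C')
    (cBC : Compatible B C) (cBC' : Compatible B C')
    (cCC' : Compatible C C') :
    B ≤ Aᗮ := by
  -- orthocomplement dimensions
  have hACo : Module.finrank ℂ (A ⊓ Cᗮ : Submodule ℂ H) = 1 := by
    have := cAC.finrank_eq; omega
  have hAC'o : Module.finrank ℂ (A ⊓ C'ᗮ : Submodule ℂ H) = 1 := by
    have := cAC'.finrank_eq; omega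
  have hBCo : Module.finrank ℂ (B ⊓ Cᗮ : Submodule ℂ H) = 1 := by
    have := cBC.finrank_eq; omega
  have hBC'o : Module.finrank ℂ (B ⊓ C'ᗮ : Submodule ℂ H) = 1 := by
    have := cBC'.finrank_eq; omega
  have hCC'o : Module.finrank ℂ (C ⊓ C'ᗮ : Submodule ℂ H) = 1 := by
    have := cCC'.finrank_eq; omega
  have hC'Co : Module.finrank ℂ (C' ⊓ Cᗮ : Submodule ℂ H) = 1 := by
    have h := cCC'.symm'.finrank_eq
    rw [inf_comm C' C] at h
    omega
  -- pick spanning vectors d, c, c'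
  obtain ⟨d, hd0, hD⟩ := exists_spanning hCC'
  obtain ⟨c, hc0, hCo⟩ := exists_spanning hCC'o
  obtain ⟨c', hc'0, hC'o⟩ := exists_spanning hC'Co
  have hdC : d ∈ C := (hD ▸ Submodule.mem_span_singleton_self d).1
  have hdC' : d ∈ C' := (hD ▸ Submodule.mem_span_singleton_self d).2
  have hcC : c ∈ C := (hCo ▸ Submodule.mem_span_singleton_self c).1
  have hcC'o : c ∈ C'ᗮ := (hCo ▸ Submodule.mem_span_singleton_self c).2
  have hc'C' : c' ∈ C' := (hC'o ▸ Submodule.mem_span_singleton_self c').1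
  have hc'Co : c' ∈ Cᗮ := (hC'o ▸ Submodule.mem_span_singleton_self c').2
  have hdc : ⟪d, c⟫ = 0 := Submodule.inner_right_of_mem_orthogonal hdC' hcC'o
  have hdc' : ⟪d, c'⟫ = 0 := Submodule.inner_right_of_mem_orthogonal hdC hc'Co
  have hCform : C = (ℂ ∙ d) ⊔ (ℂ ∙ c) := span2_eq hdC hcC hd0 hc0 hdc hC2
  have hC'form : C' = (ℂ ∙ d) ⊔ (ℂ ∙ c') := span2_eq hdC' hc'C' hd0 hc'0 hdc' hC'2
  have hcd : ⟪c, d⟫ = 0 := Submodule.inner_left_of_mem_orthogonal hdC' hcC'o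
  have hc'd : ⟪c', d⟫ = 0 := Submodule.inner_left_of_mem_orthogonal hdC hc'Co
  have hcc' : ⟪c, c'⟫ = 0 := Submodule.inner_right_of_mem_orthogonal hcC hc'Co
  have hc'c : ⟪c', c⟫ = 0 := Submodule.inner_left_of_mem_orthogonal hcC hc'Co
  by_cases h1 : A ⊓ C = A ⊓ C'
  · -- A contains d
    obtain ⟨f, hf0, hfC, hfC', hAform, hdA⟩ :=
      caseI hd0 hD hA2 hAC hAC' hACo hAC'o h1
    have h2 : B ⊓ C ≠ B ⊓ C' := by
      intro h2
      obtain ⟨g, hg0, hgC, hgC', hBform, hdB⟩ :=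
        caseI hd0 hD hB2 hBC hBC' hBCo hBC'o h2
      have : d ∈ A ⊓ B := ⟨hdA, hdB⟩
      rw [hAB] at this
      exact hd0 this
    have hBform : B = (ℂ ∙ c) ⊔ (ℂ ∙ c') :=
      engine hd0 hc0 hc'0 hCform hC'form hcC'o hc'Co hB2 hBC hBC' hBCo hBC'o h2
    rw [hAform, hBform]
    exact le_orthogonal_of_gens hdc hdc'
      (Submodule.inner_left_of_mem_orthogonal hcC hfC)
      (Submodule.inner_left_of_mem_orthogonal hc'C' hfC')
  · have hAform : A = (ℂ ∙ c) ⊔ (ℂ ∙ c') :=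
      engine hd0 hc0 hc'0 hCform hC'form hcC'o hc'Co hA2 hAC hAC' hACo hAC'o h1
    by_cases h2 : B ⊓ C = B ⊓ C'
    · obtain ⟨g, hg0, hgC, hgC', hBform, hdB⟩ :=
        caseI hd0 hD hB2 hBC hBC' hBCo hBC'o h2
      rw [hAform, hBform]
      exact le_orthogonal_of_gens hcd
        (Submodule.inner_right_of_mem_orthogonal hcC hgC) hc'd
        (Submodule.inner_right_of_mem_orthogonal hc'C' hgC')
    · have hBform : B = (ℂ ∙ c) ⊔ (ℂ ∙ c') :=
        engine hd0 hc0 hc'0 hCform hC'form hcC'o hc'Co hB2 hBC hBC' hBCo hBC'o h2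
      exfalso
      have hcA : c ∈ A := hAform ▸ Submodule.mem_sup_left (Submodule.mem_span_singleton_self c)
      have hcB : c ∈ B := hBform ▸ Submodule.mem_sup_left (Submodule.mem_span_singleton_self c)
      have : c ∈ A ⊓ B := ⟨hcA, hcB⟩
      rw [hAB] at this
      exact hc0 this

section reduce
variable {W A C : Submodule ℂ H}

lemma compat_reduce [HasOrthogonalProjection W] [HasOrthogonalProjection A]
    [HasOrthogonalProjection C] [HasOrthogonalProjection (W ⊔ A)]
    [HasOrthogonalProjection (W ⊔ C)]
    (hA : A ≤ Wᗮ) (hC : C ≤ Wᗮ)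
    (h : Compatible (W ⊔ A) (W ⊔ C)) : Compatible A C := by
  have hWA' : W ≤ Aᗮ := le_trans (Submodule.le_orthogonal_orthogonal W) (Submodule.orthogonal_le hA)
  have hWC' : W ≤ Cᗮ := le_trans (Submodule.le_orthogonal_orthogonal W) (Submodule.orthogonal_le hC)
  have hWW := projOn_idem W
  have hWC : projOn W * projOn C = 0 := projOn_comp_eq_zero hC
  have hCW : projOn C * projOn W = 0 := projOn_comp_eq_zero hWC'
  have hWA : projOn W * projOn A = 0 := projOn_comp_eq_zero hA
  have hAW : projOn A * projOn W = 0 := projOn_comp_eq_zero hWA'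
  unfold Compatible at h ⊢
  rw [projOn_sup hA, projOn_sup hC] at h
  have e1 : (projOn W + projOn A) * (projOn W + projOn C)
      = projOn W + projOn A * projOn C := by
    rw [add_mul, mul_add, mul_add, hWW, hWC, hAW, add_zero, zero_add]
  have e2 : (projOn W + projOn C) * (projOn W + projOn A)
      = projOn W + projOn C * projOn A := by
    rw [add_mul, mul_add, mul_add, hWW, hWA, hCW, add_zero, zero_add]
  rw [e1, e2] at h
  exact add_left_cancel h

lemma compat_sup_of_orth [HasOrthogonalProjection W] [HasOrthogonalProjection A]
    [HasOrthogonalProjection C] [HasOrthogonalProjection (W ⊔ A)]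
    [HasOrthogonalProjection (W ⊔ C)]
    (hA : A ≤ Wᗮ) (hC : C ≤ Wᗮ) (hAC : C ≤ Aᗮ) :
    Compatible (W ⊔ A) (W ⊔ C) := by
  have hWA' : W ≤ Aᗮ := le_trans (Submodule.le_orthogonal_orthogonal W) (Submodule.orthogonal_le hA)
  have hWC' : W ≤ Cᗮ := le_trans (Submodule.le_orthogonal_orthogonal W) (Submodule.orthogonal_le hC)
  have hCA' : A ≤ Cᗮ := le_trans (Submodule.le_orthogonal_orthogonal A) (Submodule.orthogonal_le hAC)
  unfold Compatible
  rw [projOn_sup hA, projOn_sup hC]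
  rw [add_mul, mul_add, mul_add, projOn_idem W, projOn_comp_eq_zero hC,
    projOn_comp_eq_zero hWA', projOn_comp_eq_zero hAC, add_mul, mul_add, mul_add,
    projOn_idem W, projOn_comp_eq_zero hA, projOn_comp_eq_zero hWC',
    projOn_comp_eq_zero hCA']
end reduce

lemma inter_le' {k : ℕ} (hk : 2 ≤ k) {X Y Z : Submodule ℂ H}
    [FiniteDimensional ℂ X] [FiniteDimensional ℂ Y] [FiniteDimensional ℂ Z]
    (hZk : Module.finrank ℂ Z = k)
    (hXY : Module.finrank ℂ (X ⊓ Y : Submodule ℂ H) = k - 2)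
    (hZX : Module.finrank ℂ (Z ⊓ X : Submodule ℂ H) = k - 1)
    (hZY : Module.finrank ℂ (Z ⊓ Y : Submodule ℂ H) = k - 1) :
    X ⊓ Y ≤ Z := by
  have hsup : (Z ⊓ X) ⊔ (Z ⊓ Y) ≤ Z := sup_le inf_le_left inf_le_left
  have hinf : (Z ⊓ X) ⊓ (Z ⊓ Y) ≤ X ⊓ Y :=
    le_inf (inf_le_left.trans inf_le_right) (inf_le_right.trans inf_le_right)
  have h1 := Submodule.finrank_sup_add_finrank_inf_eq (Z ⊓ X) (Z ⊓ Y)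
  have h2 : Module.finrank ℂ ((Z ⊓ X) ⊔ (Z ⊓ Y) : Submodule ℂ H) ≤ k :=
    hZk ▸ Submodule.finrank_mono hsup
  have h3 : Module.finrank ℂ ((Z ⊓ X) ⊓ (Z ⊓ Y) : Submodule ℂ H) ≤ k - 2 :=
    hXY ▸ Submodule.finrank_mono hinf
  have h4 : (Z ⊓ X) ⊓ (Z ⊓ Y) = X ⊓ Y := by
    refine Submodule.eq_of_le_of_finrank_le hinf ?_
    rw [hZX, hZY] at h1
    omega
  rw [← h4]
  exact inf_le_left.trans inf_le_left

lemma inf_inf_orth (X Z W : Submodule ℂ H) : (X ⊓ Wᗮ) ⊓ (Z ⊓ Wᗮ) = (X ⊓ Z) ⊓ Wᗮ := by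
  ext x; simp only [Submodule.mem_inf]; tauto


end AuxiliaryLemmas

/-- Let `X, Y` be `k`-dimensional subspaces of `H` with `dim (X ∩ Y) = k - 2`. If there exist
two ortho-adjacent `k`-dimensional subspaces `Z, Z'` each ortho-adjacent to both `X, Y`,
then `X` and `Y` are compatible. -/
theorem compatible_of_orthoAdjacent_pair
    (k : ℕ) (hk : 2 ≤ k) (X Y : Submodule ℂ H) (hX : IsDim k X) (hY : IsDim k Y)
    (hint : Module.finrank ℂ ↥(X ⊓ Y) = k - 2)
    (Z Z' : Submodule ℂ H) (hZ : IsDim k Z) (hZ' : IsDim k Z')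
    (hZZ' : OrthoAdjacent k Z Z')
    (hZX : OrthoAdjacent k Z X) (hZY : OrthoAdjacent k Z Y)
    (hZ'X : OrthoAdjacent k Z' X) (hZ'Y : OrthoAdjacent k Z' Y) :
    Compatible X Y := by
  haveI := hX.1; haveI := hY.1; haveI := hZ.1; haveI := hZ'.1
  obtain ⟨⟨-, hzz⟩, czz⟩ := hZZ'
  obtain ⟨⟨-, hzx⟩, czx⟩ := hZX
  obtain ⟨⟨-, hzy⟩, czy⟩ := hZY
  obtain ⟨⟨-, hz'x⟩, cz'x⟩ := hZ'X
  obtain ⟨⟨-, hz'y⟩, cz'y⟩ := hZ'Y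
  set W : Submodule ℂ H := X ⊓ Y with hWdef
  have hWZ : W ≤ Z := inter_le' hk hZ.2 hint hzx hzy
  have hWZ' : W ≤ Z' := inter_le' hk hZ'.2 hint hz'x hz'y
  set A : Submodule ℂ H := X ⊓ Wᗮ with hAdef
  set B : Submodule ℂ H := Y ⊓ Wᗮ with hBdef
  set C : Submodule ℂ H := Z ⊓ Wᗮ with hCdef
  set C' : Submodule ℂ H := Z' ⊓ Wᗮ with hC'def
  have hWX : W ≤ X := inf_le_left
  have hWY : W ≤ Y := inf_le_right
  have hXd : W ⊔ A = X := sup_inf_orthogonal_of_le hWX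
  have hYd : W ⊔ B = Y := sup_inf_orthogonal_of_le hWY
  have hZd : W ⊔ C = Z := sup_inf_orthogonal_of_le hWZ
  have hZ'd : W ⊔ C' = Z' := sup_inf_orthogonal_of_le hWZ'
  -- dimensions of the reduced spaces
  have hA2 : Module.finrank ℂ A = 2 := by
    have := finrank_inf_orthogonal_of_le hWX
    rw [hX.2] at this; rw [hint] at this; rw [hAdef]; omega
  have hB2 : Module.finrank ℂ B = 2 := by
    have := finrank_inf_orthogonal_of_le hWY
    rw [hY.2] at this; rw [hint] at this; rw [hBdef]; omega
  have hC2 : Module.finrank ℂ C = 2 := by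
    have := finrank_inf_orthogonal_of_le hWZ
    rw [hZ.2] at this; rw [hint] at this; rw [hCdef]; omega
  have hC'2 : Module.finrank ℂ C' = 2 := by
    have := finrank_inf_orthogonal_of_le hWZ'
    rw [hZ'.2] at this; rw [hint] at this; rw [hC'def]; omega
  -- trivial intersection of A and B
  have hAB : A ⊓ B = ⊥ := by
    apply le_bot_iff.1
    have h1 : A ⊓ B ≤ W ⊓ Wᗮ :=
      le_inf (le_inf (inf_le_left.trans inf_le_left) (inf_le_right.trans inf_le_left))
        (inf_le_left.trans inf_le_right)
    rwa [Submodule.inf_orthogonal_eq_bot] at h1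
  -- intersection dimensions
  have dimred : ∀ (U V : Submodule ℂ H), FiniteDimensional ℂ U → W ≤ U ⊓ V → ∀ m : ℕ,
      Module.finrank ℂ (U ⊓ V : Submodule ℂ H) = m →
      Module.finrank ℂ ((U ⊓ Wᗮ) ⊓ (V ⊓ Wᗮ) : Submodule ℂ H) + (k - 2) = m := by
    intro U V hU hWUV m hm
    haveI := hU
    rw [inf_inf_orth]
    have := finrank_inf_orthogonal_of_le hWUV
    rw [hm] at this; rw [hint] at this; omega
  have hAC : Module.finrank ℂ (A ⊓ C : Submodule ℂ H) = 1 := by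
    have := dimred X Z hX.1 (le_inf hWX hWZ) (k - 1) (by rw [inf_comm]; exact hzx)
    rw [hAdef, hCdef]; omega
  have hAC' : Module.finrank ℂ (A ⊓ C' : Submodule ℂ H) = 1 := by
    have := dimred X Z' hX.1 (le_inf hWX hWZ') (k - 1) (by rw [inf_comm]; exact hz'x)
    rw [hAdef, hC'def]; omega
  have hBC : Module.finrank ℂ (B ⊓ C : Submodule ℂ H) = 1 := by
    have := dimred Y Z hY.1 (le_inf hWY hWZ) (k - 1) (by rw [inf_comm]; exact hzy)
    rw [hBdef, hCdef]; omega
  have hBC' : Module.finrank ℂ (B ⊓ C' : Submodule ℂ H) = 1 := by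
    have := dimred Y Z' hY.1 (le_inf hWY hWZ') (k - 1) (by rw [inf_comm]; exact hz'y)
    rw [hBdef, hC'def]; omega
  have hCC' : Module.finrank ℂ (C ⊓ C' : Submodule ℂ H) = 1 := by
    have := dimred Z Z' hZ.1 (le_inf hWZ hWZ') (k - 1) hzz
    rw [hCdef, hC'def]; omega
  -- compatibility transfers
  have cAC : Compatible A C :=
    compat_reduce inf_le_right inf_le_right (by rw [hXd, hZd]; exact czx.symm')
  have cAC' : Compatible A C' :=
    compat_reduce inf_le_right inf_le_right (by rw [hXd, hZ'd]; exact cz'x.symm')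
  have cBC : Compatible B C :=
    compat_reduce inf_le_right inf_le_right (by rw [hYd, hZd]; exact czy.symm')
  have cBC' : Compatible B C' :=
    compat_reduce inf_le_right inf_le_right (by rw [hYd, hZ'd]; exact cz'y.symm')
  have cCC' : Compatible C C' :=
    compat_reduce inf_le_right inf_le_right (by rw [hZd, hZ'd]; exact czz)
  have hBA : B ≤ Aᗮ :=
    core hA2 hB2 hC2 hC'2 hAB hCC' hAC hAC' hBC hBC' cAC cAC' cBC cBC' cCC'
  rw [← hXd, ← hYd]
  exact compat_sup_of_orth inf_le_right inf_le_right hBA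

end
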